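/- Let F be an infinite field and let I = T_{Z_3}(UT_3(F)^{(-)}) be the ideal of Z_3-graded identities of UT_3(F)^{(-)} with its canonical Z_3-grading. If f, g ∈ B_{(1,1)} and V_f ≤_2 V_g in the Higman order on finite sequences of pairs of nonnegative integers (pairs compared componentwise), then g is a consequence of f modulo I, i.e. g ∈ ⟨{f} ∪ I⟩. -/

import Mathlib

open FreeLieAlgebra

/-- The free `ℤ/n`-graded Lie algebra over `F`: the free Lie algebra on countably many
variables of each homogeneous degree `g : ZMod n`; the variable `(g, i)` is the `i`-th
variable of degree `g`. -/
abbrev FreeGLie (F : Type) [Field F] (n : ℕ) := FreeLieAlgebra F (ZMod n × ℕ)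

/-- Homogeneous Lie monomials (bracket words) of degree `g`. -/
inductive HomWord (F : Type) [Field F] (n : ℕ) : ZMod n → FreeGLie F n → Prop
  | of (g : ZMod n) (i : ℕ) : HomWord F n g (FreeLieAlgebra.of F (g, i))
  | bracket {g h : ZMod n} {x y : FreeGLie F n} :
      HomWord F n g x → HomWord F n h y → HomWord F n (g + h) ⁅x, y⁆

/-- The homogeneous component of degree `g` of the free graded Lie algebra. -/
noncomputable def homComp (F : Type) [Field F] (n : ℕ) (g : ZMod n) : Submodule F (FreeGLie F n) :=
  Submodule.span F {x | HomWord F n g x}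

/-- A graded substitution sends each variable of degree `g` to a homogeneous element
of degree `g`; it induces a grading-preserving endomorphism via `FreeLieAlgebra.lift`,
and every grading-preserving endomorphism arises this way. -/
def IsGradedSubst (F : Type) [Field F] (n : ℕ) (s : ZMod n × ℕ → FreeGLie F n) : Prop :=
  ∀ g i, s (g, i) ∈ homComp F n g

/-- `S` is a `T`-ideal: the carrier of a Lie ideal of the free graded Lie algebra which is
stable under all grading-preserving endomorphisms. -/
structure IsTIdeal (F : Type) [Field F] (n : ℕ) (S : Set (FreeGLie F n)) : Prop where
  isIdeal : ∃ J : LieIdeal F (FreeGLie F n), S = ↑J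
  substClosed : ∀ s, IsGradedSubst F n s → ∀ x ∈ S, FreeLieAlgebra.lift F s x ∈ S

/-- The smallest `T`-ideal containing `S`. -/
def TClosure (F : Type) [Field F] (n : ℕ) (S : Set (FreeGLie F n)) : Set (FreeGLie F n) :=
  ⋂₀ {T | IsTIdeal F n T ∧ S ⊆ T}

/-- The degree-`g` component of the canonical `ZMod n`-grading of `UT_n(F)⁽⁻⁾`:
the span of the matrix units `e_{ij}` with `i ≤ j` and `j - i = g` in `ZMod n`. -/
def Lcomp (F : Type) [Field F] (n : ℕ) (g : ZMod n) : Submodule F (Matrix (Fin n) (Fin n) F) :=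
  Submodule.span F {A | ∃ i j : Fin n, i ≤ j ∧ ((j : ℕ) : ZMod n) - ((i : ℕ) : ZMod n) = g ∧
    A = Matrix.single i j 1}

attribute [local instance 100] LieRing.ofAssociativeRing

/-- The set of `ZMod n`-graded identities of `UT_n(F)⁽⁻⁾` (with commutator bracket),
i.e. the elements of the free graded Lie algebra vanishing under every substitution that
sends each variable of degree `g` into the component `Lcomp F n g`. -/
def gradedId (F : Type) [Field F] (n : ℕ) : Set (FreeGLie F n) :=
  {f | ∀ v : ZMod n × ℕ → Matrix (Fin n) (Fin n) F,
    (∀ g i, v (g, i) ∈ Lcomp F n g) → FreeLieAlgebra.lift F v f = 0}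

/-- The left-normed bracket `[x, l₁, l₂, …]`. -/
noncomputable def lnw (F : Type) [Field F] (n : ℕ) (x : FreeGLie F n)
    (l : List (FreeGLie F n)) : FreeGLie F n :=
  l.foldl (fun a b => ⁅a, b⁆) x

/-- The degree-0 variable `y_i`. -/
noncomputable def yv (F : Type) [Field F] (n : ℕ) (i : ℕ) : FreeGLie F n :=
  FreeLieAlgebra.of F ((0 : ZMod n), i)

/-- The list `y_off, …, y_off (a₁ times), y_{off+1}, … (a₂ times), …` of degree-0
variables with multiplicities given by the list `a`. -/
noncomputable def yblock (F : Type) [Field F] (n : ℕ) : ℕ → List ℕ → List (FreeGLie F n)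
  | _, [] => []
  | off, a :: rest => List.replicate a (yv F n off) ++ yblock F n (off + 1) rest

/-- The element `[z₁, a₁y₁,…,aₘyₘ, z₂, b₁y₁,…,bₘyₘ]` of `B₍₁,₁₎`, where `z₁, z₂` are the
degree-1 variables `(1,0)`, `(1,1)`; the exponent data is the list `p = ((a₁,b₁),…,(aₘ,bₘ))`,
which is exactly the sequence `V` attached to the element. -/
noncomputable def B11 (F : Type) [Field F] (p : List (ℕ × ℕ)) : FreeGLie F 3 :=
  lnw F 3 (FreeLieAlgebra.of F ((1 : ZMod 3), 0))
    (yblock F 3 0 (p.map Prod.fst) ++ [FreeLieAlgebra.of F ((1 : ZMod 3), 1)] ++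
      yblock F 3 0 (p.map Prod.snd))

section Aux

open FreeLieAlgebra

variable (F : Type) [Field F]

noncomputable def z1v : FreeGLie F 3 := FreeLieAlgebra.of F ((1 : ZMod 3), 0)
noncomputable def z2v : FreeGLie F 3 := FreeLieAlgebra.of F ((1 : ZMod 3), 1)

noncomputable def Del (l1 l2 : List ℕ) : FreeGLie F 3 :=
  lnw F 3 (z1v F) (l1.map (yv F 3) ++ [z2v F] ++ l2.map (yv F 3))

def blow : ℕ → List ℕ → List ℕ
  | _, [] => []
  | off, a :: r => List.replicate a off ++ blow (off + 1) r

lemma yblock_eq (n : ℕ) : ∀ (l : List ℕ) (off : ℕ),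
    yblock F n off l = (blow off l).map (yv F n)
  | [], _ => rfl
  | a :: r, off => by
      simp [yblock, blow, yblock_eq n r (off + 1), List.map_replicate]

lemma B11_eq (r : List (ℕ × ℕ)) :
    B11 F r = Del F (blow 0 (r.map Prod.fst)) (blow 0 (r.map Prod.snd)) := by
  simp [B11, Del, z1v, z2v, yblock_eq]

lemma lnw_cons (n : ℕ) (x a : FreeGLie F n) (l : List (FreeGLie F n)) :
    lnw F n x (a :: l) = lnw F n ⁅x, a⁆ l := rfl

lemma lnw_append (n : ℕ) (x : FreeGLie F n) (l m : List (FreeGLie F n)) :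
    lnw F n x (l ++ m) = lnw F n (lnw F n x l) m :=
  List.foldl_append

lemma lnw_sub (n : ℕ) : ∀ (l : List (FreeGLie F n)) (a b : FreeGLie F n),
    lnw F n (a - b) l = lnw F n a l - lnw F n b l
  | [], _, _ => rfl
  | c :: l, a, b => by
      rw [lnw_cons, lnw_cons, lnw_cons, sub_lie, lnw_sub n l]

lemma lift_lnw (n : ℕ) (f : ZMod n × ℕ → FreeGLie F n) :
    ∀ (l : List (FreeGLie F n)) (x : FreeGLie F n),
      FreeLieAlgebra.lift F f (lnw F n x l)
        = lnw F n (FreeLieAlgebra.lift F f x) (l.map (FreeLieAlgebra.lift F f))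
  | [], _ => rfl
  | a :: l, x => by
      rw [lnw_cons, lift_lnw n f l, LieHom.map_lie, List.map_cons, lnw_cons]

variable {F}

lemma lnw_mem {n : ℕ} (J : LieIdeal F (FreeGLie F n)) :
    ∀ (l : List (FreeGLie F n)) {x : FreeGLie F n}, x ∈ J → lnw F n x l ∈ J
  | [], _, hx => hx
  | a :: l, x, hx => by
      rw [lnw_cons]
      refine lnw_mem J l ?_
      rw [← lie_skew]
      exact neg_mem (J.lie_mem hx)

lemma perm_sub_mem (J : LieIdeal F (FreeGLie F 3))
    (hyy : ∀ i j, ⁅yv F 3 i, yv F 3 j⁆ ∈ J) (m : List (FreeGLie F 3))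
    {l l' : List ℕ} (h : l.Perm l') : ∀ x : FreeGLie F 3,
      lnw F 3 x (l.map (yv F 3) ++ m) - lnw F 3 x (l'.map (yv F 3) ++ m) ∈ J := by
  induction h with
  | nil => intro x; simp
  | cons a h ih =>
      intro x
      simpa [lnw_cons] using ih ⁅x, yv F 3 a⁆
  | swap a b l =>
      intro x
      have key : ⁅⁅x, yv F 3 b⁆, yv F 3 a⁆ - ⁅⁅x, yv F 3 a⁆, yv F 3 b⁆
          = ⁅x, ⁅yv F 3 b, yv F 3 a⁆⁆ := by
        rw [leibniz_lie x (yv F 3 b) (yv F 3 a), ← lie_skew (yv F 3 b) ⁅x, yv F 3 a⁆]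
        abel
      have hmem : ⁅x, ⁅yv F 3 b, yv F 3 a⁆⁆ ∈ J := J.lie_mem (hyy b a)
      have := lnw_mem J (l.map (yv F 3) ++ m) hmem
      rw [← key, lnw_sub] at this
      simpa [lnw_cons] using this
  | trans h1 h2 ih1 ih2 =>
      intro x
      have := add_mem (ih1 x) (ih2 x)
      simpa using this

lemma Del_perm (J : LieIdeal F (FreeGLie F 3))
    (hyy : ∀ i j, ⁅yv F 3 i, yv F 3 j⁆ ∈ J) {l1 l1' l2 l2' : List ℕ}
    (h1 : l1.Perm l1') (h2 : l2.Perm l2') :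
    Del F l1 l2 - Del F l1' l2' ∈ J := by
  have e1 : Del F l1 l2 - Del F l1' l2 ∈ J := by
    have := perm_sub_mem J hyy ([z2v F] ++ l2.map (yv F 3)) h1 (z1v F)
    simpa [Del, List.append_assoc] using this
  have e2 : Del F l1' l2 - Del F l1' l2' ∈ J := by
    have := perm_sub_mem J hyy []
      h2 (lnw F 3 (z1v F) (l1'.map (yv F 3) ++ [z2v F]))
    simpa [Del, ← lnw_append] using this
  have := add_mem e1 e2
  simpa using this

lemma homWord_lnw {n : ℕ} {g : ZMod n} {x : FreeGLie F n} (h : HomWord F n g x) :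
    ∀ l : List ℕ, HomWord F n g (lnw F n x (l.map (yv F n))) := by
  intro l
  induction l generalizing x with
  | nil => exact h
  | cons a l ih =>
      rw [List.map_cons, lnw_cons]
      refine ih ?_
      have := HomWord.bracket h (HomWord.of (0 : ZMod n) a)
      rwa [add_zero] at this

lemma blow_succ : ∀ (l : List ℕ) (off : ℕ),
    blow (off + 1) l = (blow off l).map Nat.succ
  | [], _ => rfl
  | a :: r, off => by
      simp [blow, blow_succ r (off + 1), List.map_replicate]

lemma mem_blow : ∀ (l : List ℕ) (off k : ℕ), k ∈ blow off l → off ≤ k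
  | [], _, _, h => by simp [blow] at h
  | a :: r, off, k, h => by
      rcases List.mem_append.mp h with h | h
      · exact (List.eq_of_mem_replicate h).ge
      · exact (Nat.le_succ off).trans (mem_blow r (off + 1) k h)

lemma comb_step (off a1 b1 : ℕ) (hab : a1 ≤ b1) (φ' : ℕ → ℕ) (P Q : List ℕ)
    (hPQ : ((P.map φ' : List ℕ) : Multiset ℕ) ≤ (Q : Multiset ℕ))
    (hP : ∀ k ∈ P, off + 1 ≤ k) :
    (((List.replicate a1 off ++ P).map (fun k => if k = off then off else φ' k) :
        List ℕ) : Multiset ℕ) ≤ ((List.replicate b1 off ++ Q : List ℕ) : Multiset ℕ) := by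
  have hmap : P.map (fun k => if k = off then off else φ' k) = P.map φ' := by
    refine List.map_congr_left fun k hk => ?_
    have : k ≠ off := by have := hP k hk; omega
    simp [this]
  rw [List.map_append, List.map_replicate, if_pos rfl, hmap, ← Multiset.coe_add,
    ← Multiset.coe_add]
  refine add_le_add ?_ hPQ
  rw [Multiset.coe_replicate, Multiset.coe_replicate]
  exact (Multiset.replicate_le_replicate off).mpr hab

lemma comb {p q : List (ℕ × ℕ)} (h : List.SublistForall₂ (· ≤ ·) p q) :
    ∀ off, ∃ φ : ℕ → ℕ,
      (((blow off (p.map Prod.fst)).map φ : List ℕ) : Multiset ℕ)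
          ≤ ((blow off (q.map Prod.fst) : List ℕ) : Multiset ℕ) ∧
      (((blow off (p.map Prod.snd)).map φ : List ℕ) : Multiset ℕ)
          ≤ ((blow off (q.map Prod.snd) : List ℕ) : Multiset ℕ) := by
  induction h with
  | nil => exact fun off => ⟨id, by simp [blow], by simp [blow]⟩
  | @cons a b p' q' hab h ih =>
      intro off
      obtain ⟨φ', h1, h2⟩ := ih (off + 1)
      refine ⟨fun k => if k = off then off else φ' k, ?_, ?_⟩
      · simpa [blow] using
          comb_step off a.1 b.1 hab.1 φ' _ _ h1 (mem_blow _ _)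
      · simpa [blow] using
          comb_step off a.2 b.2 hab.2 φ' _ _ h2 (mem_blow _ _)
  | @cons_right b p' q2 h ih =>
      intro off
      obtain ⟨φ', h1, h2⟩ := ih (off + 1)
      refine ⟨φ' ∘ Nat.succ, ?_, ?_⟩
      · calc (((blow off (p'.map Prod.fst)).map (φ' ∘ Nat.succ) : List ℕ) : Multiset ℕ)
            = (((blow (off + 1) (p'.map Prod.fst)).map φ' : List ℕ) : Multiset ℕ) := by
              rw [blow_succ, List.map_map]
          _ ≤ ((blow (off + 1) (q2.map Prod.fst) : List ℕ) : Multiset ℕ) := h1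
          _ ≤ _ := by
              simp only [List.map_cons, blow, ← Multiset.coe_add]
              exact le_add_self
      · calc (((blow off (p'.map Prod.snd)).map (φ' ∘ Nat.succ) : List ℕ) : Multiset ℕ)
            = (((blow (off + 1) (p'.map Prod.snd)).map φ' : List ℕ) : Multiset ℕ) := by
              rw [blow_succ, List.map_map]
          _ ≤ ((blow (off + 1) (q2.map Prod.snd) : List ℕ) : Multiset ℕ) := h2
          _ ≤ _ := by
              simp only [List.map_cons, blow, ← Multiset.coe_add]
              exact le_add_self

lemma Lcomp_zero_comm :
    ∀ a ∈ Lcomp F 3 0, ∀ b ∈ Lcomp F 3 0, a * b = b * a := by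
  have hgen : ∀ A ∈ {A : Matrix (Fin 3) (Fin 3) F | ∃ i j : Fin 3, i ≤ j ∧
      ((j : ℕ) : ZMod 3) - ((i : ℕ) : ZMod 3) = 0 ∧ A = Matrix.single i j 1},
      ∃ i : Fin 3, A = Matrix.single i i 1 := by
    rintro A ⟨i, j, hij, hz, rfl⟩
    have : i = j := by
      fin_cases i <;> fin_cases j <;> first | rfl | (exfalso; revert hz hij; decide)
    exact ⟨i, by rw [this]⟩
  intro a ha b hb
  induction ha using Submodule.span_induction with
  | mem x hx =>
      induction hb using Submodule.span_induction with
      | mem y hy =>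
          obtain ⟨i, rfl⟩ := hgen x hx
          obtain ⟨j, rfl⟩ := hgen y hy
          by_cases hij : i = j
          · subst hij; rfl
          · rw [Matrix.single_mul_single_of_ne (h := hij),
              Matrix.single_mul_single_of_ne (h := Ne.symm hij)]
      | zero => simp
      | add y z _ _ hy hz => rw [mul_add, add_mul, hy, hz]
      | smul c y _ hy => rw [mul_smul_comm, smul_mul_assoc, hy]
  | zero => simp
  | add x y _ _ hx hy => rw [add_mul, mul_add, hx, hy]
  | smul c x _ hx => rw [smul_mul_assoc, mul_smul_comm, hx]

lemma yy_gradedId (i j : ℕ) : ⁅yv F 3 i, yv F 3 j⁆ ∈ gradedId F 3 := by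
  intro v hv
  rw [LieHom.map_lie]
  simp only [yv, FreeLieAlgebra.lift_of_apply]
  have := Lcomp_zero_comm (v (0, i)) (hv 0 i) (v (0, j)) (hv 0 j)
  rw [Ring.lie_def, this, sub_self]

end Aux

/-- If `f, g ∈ B₍₁,₁₎` and `V_f ≤₂ V_g` in the Higman order on finite
sequences of pairs of nonnegative integers (pairs compared componentwise), then `g` is a
consequence of `f` modulo the ideal `I` of `ZMod 3`-graded identities of `UT₃(F)⁽⁻⁾`. -/
theorem stmt4 (F : Type) [Field F] [Infinite F] (p q : List (ℕ × ℕ))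
    (h : List.SublistForall₂ (· ≤ ·) p q) :
    B11 F q ∈ TClosure F 3 ({B11 F p} ∪ gradedId F 3) := by
  classical
  refine Set.mem_sInter.mpr ?_
  rintro T ⟨hT, hSub⟩
  obtain ⟨J, rfl⟩ := hT.isIdeal
  have hyy : ∀ i j, ⁅yv F 3 i, yv F 3 j⁆ ∈ J := fun i j =>
    hSub (Set.mem_union_right _ (yy_gradedId i j))
  obtain ⟨φ, hle1, hle2⟩ := comb h 0
  set P1 := blow 0 (p.map Prod.fst) with hP1
  set P2 := blow 0 (p.map Prod.snd) with hP2
  set Q1 := blow 0 (q.map Prod.fst) with hQ1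
  set Q2 := blow 0 (q.map Prod.snd) with hQ2
  set A : List ℕ :=
    ((Q1 : Multiset ℕ) - ((P1.map φ : List ℕ) : Multiset ℕ)).toList with hA
  set B : List ℕ :=
    ((Q2 : Multiset ℕ) - ((P2.map φ : List ℕ) : Multiset ℕ)).toList with hB
  set s : ZMod 3 × ℕ → FreeGLie F 3 := fun gi =>
    if gi.1 = 0 then yv F 3 (φ gi.2)
    else if gi = ((1 : ZMod 3), 0) then lnw F 3 (z1v F) (A.map (yv F 3))
    else FreeLieAlgebra.of F gi with hs
  have hsubst : IsGradedSubst F 3 s := by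
    intro g i
    by_cases hg : g = 0
    · subst hg
      simp only [hs, if_pos rfl]
      exact Submodule.subset_span (HomWord.of 0 (φ i))
    · by_cases h10 : ((g, i) : ZMod 3 × ℕ) = ((1 : ZMod 3), 0)
      · obtain ⟨hg1, hi⟩ := Prod.mk.inj h10
        subst hg1; subst hi
        have h1ne : (1 : ZMod 3) ≠ 0 := by decide
        simp only [hs, if_neg h1ne, if_pos rfl]
        exact Submodule.subset_span
          (homWord_lnw (HomWord.of (1 : ZMod 3) 0) A)
      · simp only [hs, if_neg hg, if_neg h10]
        exact Submodule.subset_span (HomWord.of g i)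
  have hmem1 : B11 F p ∈ (J : Set (FreeGLie F 3)) := hSub (Set.mem_union_left _ rfl)
  have hmem2 := hT.substClosed s hsubst _ hmem1
  have hy : ∀ k, FreeLieAlgebra.lift F s (yv F 3 k) = yv F 3 (φ k) := by
    intro k
    rw [yv, FreeLieAlgebra.lift_of_apply]
    simp [hs]
  have hz1 : FreeLieAlgebra.lift F s (z1v F) = lnw F 3 (z1v F) (A.map (yv F 3)) := by
    conv_lhs => rw [z1v]
    rw [FreeLieAlgebra.lift_of_apply]
    have h1ne : (1 : ZMod 3) ≠ 0 := by decide
    simp [hs, h1ne]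
  have hz2 : FreeLieAlgebra.lift F s (z2v F) = z2v F := by
    conv_lhs => rw [z2v]
    rw [FreeLieAlgebra.lift_of_apply]
    have h1ne : ¬ ((1 : ZMod 3) = 0) := by decide
    have hne : ¬ ((((1 : ZMod 3), 1) : ZMod 3 × ℕ) = ((1 : ZMod 3), 0)) := by
      intro hcon
      exact one_ne_zero (congrArg Prod.snd hcon)
    simp only [hs]
    rw [if_neg h1ne, if_neg hne, z2v]
  have hcalc : FreeLieAlgebra.lift F s (B11 F p) = Del F (A ++ P1.map φ) (P2.map φ) := by
    rw [B11_eq, Del, lift_lnw, hz1, ← lnw_append, Del]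
    congr 1
    rw [← hP1, ← hP2]
    simp only [List.map_append, List.map_map, List.map_cons, List.map_nil,
      Function.comp_def, hy, hz2, List.append_assoc]
  have hmem3 : Del F (A ++ P1.map φ) (P2.map φ ++ B) ∈ J := by
    have heq : lnw F 3 (Del F (A ++ P1.map φ) (P2.map φ)) (B.map (yv F 3))
        = Del F (A ++ P1.map φ) (P2.map φ ++ B) := by
      rw [Del, Del, ← lnw_append]
      simp [List.map_append, List.append_assoc]
    rw [← heq]
    refine lnw_mem J _ ?_
    rw [← hcalc]
    exact hmem2
  have perm1 : Q1.Perm (A ++ P1.map φ) := by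
    refine (Multiset.coe_eq_coe.mp ?_).symm
    rw [← Multiset.coe_add, hA, Multiset.coe_toList, tsub_add_cancel_of_le hle1]
  have perm2 : Q2.Perm (P2.map φ ++ B) := by
    refine (Multiset.coe_eq_coe.mp ?_).symm
    rw [← Multiset.coe_add, hB, Multiset.coe_toList, add_tsub_cancel_of_le hle2]
  have hdiff : B11 F q - Del F (A ++ P1.map φ) (P2.map φ ++ B) ∈ J := by
    rw [B11_eq, ← hQ1, ← hQ2]
    exact Del_perm J hyy perm1 perm2
  have : B11 F q ∈ J := by
    have := add_mem hdiff hmem3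
    simpa using this
  exact this
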